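/- arXiv:2006.13206 — 2 statements merged into one kernel-verified Lean document; each statement's English description precedes it below -/
import Mathlib

section
/- Let r ≥ 3 and let G be an n-vertex linear r-uniform hypergraph with minimum degree δ. Fix a vertex x and let L_i denote the set of vertices at distance i from x (in the linear-path metric). If d is an integer with 1 ≤ d ≤ δ/2 and for every i in [t] the inequality |L_{i−1}| + |L_i| + |L_{i+1}| ≥ (2δ/d)|L_i| holds, then for every i in [t] one has |L_i| > (δ/d)|L_{i−1}|. -/
/-- A hypergraph (edge set) is linear if any two distinct edges share at most one vertex. -/
def HLinear {V : Type*} [DecidableEq V] (E : Finset (Finset V)) : Prop :=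
  ∀ e ∈ E, ∀ f ∈ E, e ≠ f → (e ∩ f).card ≤ 1

/-- Degree of a vertex in a hypergraph: number of edges containing it. -/
def hdeg {V : Type*} [DecidableEq V] (E : Finset (Finset V)) (v : V) : ℕ :=
  (E.filter (fun e => v ∈ e)).card

/-- A linear path of length `t`: consecutive edges share exactly one vertex,
non-consecutive edges are disjoint. -/
def IsLinearPath {V : Type*} [DecidableEq V] (E : Finset (Finset V)) (t : ℕ)
    (P : Fin t → Finset V) : Prop :=
  (∀ i, P i ∈ E) ∧
  (∀ i j : Fin t, (i : ℕ) + 1 = j → (P i ∩ P j).card = 1) ∧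
  (∀ i j : Fin t, (i : ℕ) + 1 < j → P i ∩ P j = ∅)

/-- A linear cycle of length `t ≥ 3`: cyclically consecutive edges share exactly one
vertex, all other pairs of edges are disjoint. -/
def IsLinearCycle {V : Type*} [DecidableEq V] (E : Finset (Finset V)) (t : ℕ)
    (C : Fin t → Finset V) : Prop :=
  3 ≤ t ∧ (∀ i, C i ∈ E) ∧
  (∀ i j : Fin t, ((i : ℕ) + 1) % t = j → (C i ∩ C j).card = 1) ∧
  (∀ i j : Fin t, i ≠ j → ((i : ℕ) + 1) % t ≠ j → ((j : ℕ) + 1) % t ≠ i →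
    C i ∩ C j = ∅)

/-- Distance between two vertices of a linear hypergraph: the length of a shortest
linear path whose first edge contains `x` and whose last edge contains `y`
(`⊤` if there is no such path, `0` iff `x = y`). -/
noncomputable def hdist {V : Type*} [DecidableEq V] (E : Finset (Finset V)) (x y : V) : ℕ∞ :=
  if x = y then 0 else
  sInf ((fun t : ℕ => (t : ℕ∞)) ''
    {t | ∃ (ht : 0 < t) (P : Fin t → Finset V), IsLinearPath E t P ∧
      x ∈ P ⟨0, ht⟩ ∧ y ∈ P ⟨t - 1, Nat.sub_lt ht Nat.one_pos⟩})

lemma one_le_sInf_aux {V : Type*} [DecidableEq V] (E : Finset (Finset V)) (x y : V) :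
    (1 : ℕ∞) ≤ sInf ((fun t : ℕ => (t : ℕ∞)) ''
    {t | ∃ (ht : 0 < t) (P : Fin t → Finset V), IsLinearPath E t P ∧
      x ∈ P ⟨0, ht⟩ ∧ y ∈ P ⟨t - 1, Nat.sub_lt ht Nat.one_pos⟩}) := by
  apply le_sInf
  rintro b ⟨n, ⟨hn, -⟩, rfl⟩
  show (1:ℕ∞) ≤ (n:ℕ∞)
  exact_mod_cast hn

lemma hdist_eq_zero_iff {V : Type*} [DecidableEq V] (E : Finset (Finset V)) (x v : V) :
    hdist E x v = 0 ↔ x = v := by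
  constructor
  · intro h
    by_contra hxv
    rw [hdist, if_neg hxv] at h
    have := one_le_sInf_aux E x v
    rw [h] at this
    exact absurd this (by simp)
  · intro h; simp [hdist, h]

lemma hdist_eq_one {V : Type*} [DecidableEq V] (E : Finset (Finset V)) {x y : V}
    {e : Finset V} (he : e ∈ E) (hx : x ∈ e) (hy : y ∈ e) (hxy : x ≠ y) :
    hdist E x y = 1 := by
  rw [hdist, if_neg hxy]
  refine le_antisymm ?_ (one_le_sInf_aux E x y)
  apply sInf_le
  refine ⟨1, ⟨Nat.one_pos, fun _ => e, ⟨fun _ => he, ?_, ?_⟩, hx, hy⟩, rfl⟩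
  · intro i j hij
    exact absurd hij (by have := j.isLt; omega)
  · intro i j hij
    exact absurd hij (by have := j.isLt; omega)

/-- the level-expansion claim from Lemma 3.2 of the paper. -/
theorem stmt10 {V : Type*} [Fintype V] [DecidableEq V] (r : ℕ) (hr : 3 ≤ r)
    (E : Finset (Finset V)) (hcard : ∀ e ∈ E, e.card = r) (hlin : HLinear E)
    (δ : ℕ) (hδ : ∀ v : V, δ ≤ hdeg E v)
    (x : V) (d t : ℕ) (hd1 : 1 ≤ d) (hd2 : (d : ℝ) ≤ (δ : ℝ) / 2)
    (L : ℕ → Finset V)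
    (hL : ∀ i, L i = Finset.univ.filter (fun v => hdist E x v = (i : ℕ∞)))
    (hexp : ∀ i ∈ Finset.Icc 1 t,
      (2 * (δ : ℝ) / d) * (L i).card ≤
        ((L (i - 1)).card : ℝ) + (L i).card + (L (i + 1)).card) :
    ∀ i ∈ Finset.Icc 1 t, ((δ : ℝ) / d) * (L (i - 1)).card < ((L i).card : ℝ) := by
  have hd0 : (0:ℝ) < d := by exact_mod_cast hd1
  have hδ2 : (2:ℝ) * d ≤ δ := by linarith
  have hδ0 : (0:ℝ) < δ := by linarith
  have hD2 : (2:ℝ) ≤ δ / d := by rw [le_div_iff₀ hd0]; linarith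
  -- L 0 = {x}
  have hL0 : L 0 = {x} := by
    rw [hL 0]
    ext v
    simp only [Finset.mem_filter, Finset.mem_univ, true_and, Finset.mem_singleton,
      Nat.cast_zero]
    rw [hdist_eq_zero_iff]
    exact eq_comm
  -- lower bound on |L 1|
  have hL1 : 2 * δ ≤ (L 1).card := by
    set S : Finset V := (E.filter (fun e => x ∈ e)).biUnion (fun e => e.erase x) with hS
    have hsub : S ⊆ L 1 := by
      intro y hy
      rw [hS, Finset.mem_biUnion] at hy
      obtain ⟨e, he, hye⟩ := hy
      rw [Finset.mem_filter] at he
      rw [Finset.mem_erase] at hye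
      rw [hL 1, Finset.mem_filter]
      refine ⟨Finset.mem_univ _, ?_⟩
      have := hdist_eq_one E he.1 he.2 hye.2 (Ne.symm hye.1)
      simpa using this
    have hcardS : S.card = (E.filter (fun e => x ∈ e)).card * (r - 1) := by
      rw [hS, Finset.card_biUnion]
      · rw [Finset.sum_congr rfl (fun e he => ?_), Finset.sum_const, smul_eq_mul]
        rw [Finset.mem_filter] at he
        rw [Finset.card_erase_of_mem he.2, hcard e he.1]
      · intro e he f hf hef
        rw [Finset.mem_coe, Finset.mem_filter] at he hf
        have h1 : (e ∩ f).card ≤ 1 := hlin e he.1 f hf.1 hef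
        rw [Function.onFun, Finset.disjoint_left]
        intro a hae haf
        rw [Finset.mem_erase] at hae haf
        have hxe : x ∈ e ∩ f := Finset.mem_inter.mpr ⟨he.2, hf.2⟩
        have hae' : a ∈ e ∩ f := Finset.mem_inter.mpr ⟨hae.2, haf.2⟩
        have : ({x, a} : Finset V) ⊆ e ∩ f := by
          intro z hz
          simp only [Finset.mem_insert, Finset.mem_singleton] at hz
          rcases hz with rfl | rfl
          exacts [hxe, hae']
        have h2 : ({x, a} : Finset V).card = 2 := by
          rw [Finset.card_insert_of_notMem (by simpa using (Ne.symm hae.1)),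
            Finset.card_singleton]
        have := Finset.card_le_card this
        omega
    have hdeg' : δ ≤ (E.filter (fun e => x ∈ e)).card := hδ x
    calc 2 * δ ≤ δ * (r - 1) := by
          have : 2 ≤ r - 1 := by omega
          nlinarith
      _ ≤ (E.filter (fun e => x ∈ e)).card * (r - 1) := Nat.mul_le_mul_right _ hdeg'
      _ = S.card := hcardS.symm
      _ ≤ (L 1).card := Finset.card_le_card hsub
  -- main induction
  have main : ∀ i, 1 ≤ i → i ≤ t → ((δ : ℝ) / d) * (L (i - 1)).card < ((L i).card : ℝ) := by
    intro i hi1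
    induction i, hi1 using Nat.le_induction with
    | base =>
      intro _
      simp only [Nat.sub_self, hL0, Finset.card_singleton, Nat.cast_one, mul_one]
      have h1 : (2 * δ : ℝ) ≤ ((L 1).card : ℝ) := by exact_mod_cast hL1
      have : (δ:ℝ) / d ≤ δ := by
        rw [div_le_iff₀ hd0]
        have hd1' : (1:ℝ) ≤ d := by exact_mod_cast hd1
        nlinarith [mul_nonneg hδ0.le (by linarith : (0:ℝ) ≤ (d:ℝ) - 1)]
      linarith
    | succ i hi ih =>
      intro hit
      have ih' := ih (by omega)
      have he := hexp i (Finset.mem_Icc.mpr ⟨hi, by omega⟩)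
      simp only [Nat.add_sub_cancel]
      set a : ℝ := ((L (i-1)).card : ℝ)
      set b : ℝ := ((L i).card : ℝ)
      set c : ℝ := ((L (i+1)).card : ℝ)
      have ha : 0 ≤ a := Nat.cast_nonneg _
      have hb : 0 ≤ b := Nat.cast_nonneg _
      -- ih' : δ/d * a < b,  he : 2δ/d * b ≤ a + b + c, goal: δ/d * b < c
      have hb0 : 0 < b := lt_of_le_of_lt (by positivity) ih'
      have he' : 2 * ((δ:ℝ)/d) * b ≤ a + b + c := by
        rw [show (2:ℝ) * ((δ:ℝ)/d) = 2 * δ / d by ring]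
        exact he
      nlinarith [mul_pos hd0 hb0, sq_nonneg ((δ:ℝ)/d - 2)]
  intro i hi
  rw [Finset.mem_Icc] at hi
  exact main i hi.1 hi.2
end

section
/- Let r ≥ 3 be an integer, G a linear r-uniform hypergraph on n vertices, d an integer with 1 ≤ d ≤ δ(G)/2, and x ∈ V(G). Then there exist a positive integer m ≤ ⌈log n / log(δ(G)/d)⌉ and a subhypergraph H of G such that H has average degree at least d/4, every edge of H contains at least one vertex at distance exactly m from x, and no edge of H contains a vertex at distance less than m from x. -/
namespace Stmt11
variable {V : Type*} [DecidableEq V]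

lemma hdist_le_of_path (E : Finset (Finset V)) (x y : V) {t : ℕ} (ht : 0 < t)
    (P : Fin t → Finset V) (hP : IsLinearPath E t P)
    (hx : x ∈ P ⟨0, ht⟩) (hy : y ∈ P ⟨t - 1, Nat.sub_lt ht Nat.one_pos⟩) :
    hdist E x y ≤ (t : ℕ∞) := by
  unfold hdist
  split_ifs with h
  · exact zero_le
  · exact sInf_le ⟨t, ⟨ht, P, hP, hx, hy⟩, rfl⟩

lemma one_le_hdist (E : Finset (Finset V)) {x y : V} (h : x ≠ y) : 1 ≤ hdist E x y := by
  unfold hdist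
  rw [if_neg h]
  refine le_sInf ?_
  rintro b ⟨t, ⟨ht, _⟩, rfl⟩
  show (1:ℕ∞) ≤ (t:ℕ∞)
  exact_mod_cast ht

lemma hdist_eq_zero_iff (E : Finset (Finset V)) {x y : V} : hdist E x y = 0 ↔ x = y := by
  constructor
  · intro h
    by_contra hne
    have := one_le_hdist E hne
    rw [h] at this
    simp at this
  · intro h; unfold hdist; rw [if_pos h]

lemma natCast_sInf_image (T : Set ℕ) (hT : T.Nonempty) :
    sInf ((fun t : ℕ => (t : ℕ∞)) '' T) = ((sInf T : ℕ) : ℕ∞) := by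
  apply le_antisymm
  · exact sInf_le (Set.mem_image_of_mem _ (Nat.sInf_mem hT))
  · refine le_sInf ?_
    rintro b ⟨t, ht, rfl⟩
    show ((sInf T : ℕ) : ℕ∞) ≤ (t : ℕ∞)
    exact_mod_cast Nat.sInf_le ht

lemma exists_path_of_hdist (E : Finset (Finset V)) {x y : V} (h : x ≠ y) {t : ℕ}
    (hd : hdist E x y = (t : ℕ∞)) :
    ∃ (ht : 0 < t) (P : Fin t → Finset V), IsLinearPath E t P ∧
      x ∈ P ⟨0, ht⟩ ∧ y ∈ P ⟨t - 1, Nat.sub_lt ht Nat.one_pos⟩ := by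
  unfold hdist at hd
  rw [if_neg h] at hd
  by_cases hT : ({t | ∃ (ht : 0 < t) (P : Fin t → Finset V), IsLinearPath E t P ∧
      x ∈ P ⟨0, ht⟩ ∧ y ∈ P ⟨t - 1, Nat.sub_lt ht Nat.one_pos⟩} : Set ℕ).Nonempty
  · rw [natCast_sInf_image _ hT, Nat.cast_inj] at hd
    have hmem := Nat.sInf_mem hT
    rw [hd] at hmem
    exact hmem
  · rw [Set.not_nonempty_iff_eq_empty] at hT
    rw [hT] at hd
    simp at hd

lemma trunc_path {E : Finset (Finset V)} {t : ℕ} {P : Fin t → Finset V}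
    (hP : IsLinearPath E t P) {k : ℕ} (hk : k < t) :
    IsLinearPath E (k + 1) (fun j : Fin (k + 1) => P ⟨j, Nat.lt_of_lt_of_le j.2 hk⟩) := by
  obtain ⟨h1, h2, h3⟩ := hP
  refine ⟨fun i => h1 _, fun i j hij => h2 _ _ hij, fun i j hij => h3 _ _ hij⟩

lemma append_path {E : Finset (Finset V)} (hlin : HLinear E) {t : ℕ} {P : Fin t → Finset V}
    (hP : IsLinearPath E t P) {k : ℕ} (hk : k < t) {e : Finset V} (he : e ∈ E)
    (hcard1 : (P ⟨k, hk⟩ ∩ e).card = 1)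
    (hdisj : ∀ j : ℕ, (hj : j < k) → P ⟨j, by omega⟩ ∩ e = ∅) :
    IsLinearPath E (k + 2)
      (fun j : Fin (k + 2) => if h : (j : ℕ) < k + 1 then P ⟨j, by omega⟩ else e) := by
  obtain ⟨h1, h2, h3⟩ := hP
  have hPeq : ∀ (a b : ℕ) (ha : a < t) (hb : b < t), a = b → P ⟨a, ha⟩ = P ⟨b, hb⟩ := by
    intro a b ha hb hab; subst hab; rfl
  refine ⟨?_, ?_, ?_⟩
  · intro i; dsimp only; split_ifs
    · exact h1 _
    · exact he
  · intro i j hij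
    have hj2 := j.2
    dsimp only
    by_cases hj : (j : ℕ) < k + 1
    · have hi : (i : ℕ) < k + 1 := by omega
      rw [dif_pos hi, dif_pos hj]
      exact h2 _ _ hij
    · have hi : (i : ℕ) = k := by omega
      have hi' : (i : ℕ) < k + 1 := by omega
      rw [dif_pos hi', dif_neg hj, hPeq (i : ℕ) k (by omega) hk hi]
      exact hcard1
  · intro i j hij
    have hj2 := j.2
    dsimp only
    by_cases hj : (j : ℕ) < k + 1
    · have hi : (i : ℕ) < k + 1 := by omega
      rw [dif_pos hi, dif_pos hj]
      exact h3 _ _ hij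
    · have hi : (i : ℕ) < k := by omega
      have hi' : (i : ℕ) < k + 1 := by omega
      rw [dif_pos hi', dif_neg hj]
      exact hdisj (i : ℕ) hi

lemma hdist_le_add_one {E : Finset (Finset V)} (hlin : HLinear E) {e : Finset V} (he : e ∈ E)
    {x u v : V} (hu : u ∈ e) (hv : v ∈ e) :
    hdist E x u ≤ hdist E x v + 1 := by
  by_cases hxu : x = u
  · have : hdist E x u = 0 := (hdist_eq_zero_iff E).mpr hxu
    rw [this]; exact zero_le
  by_cases hxv : x = v
  · have hP : IsLinearPath E 1 (fun _ => e) := by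
      refine ⟨fun _ => he, ?_, ?_⟩
      · intro i j hij; have := j.2; omega
      · intro i j hij; have := j.2; omega
    have h1 : hdist E x u ≤ (1 : ℕ∞) := by
      have := hdist_le_of_path E x u (by norm_num) (fun _ => e) hP (hxv ▸ hv) hu
      exact_mod_cast this
    have h0 : hdist E x v = 0 := (hdist_eq_zero_iff E).mpr hxv
    rw [h0, zero_add]
    exact h1
  by_cases htop : hdist E x v = ⊤
  · rw [htop]; exact le_top
  obtain ⟨t, ht⟩ := WithTop.ne_top_iff_exists.mp htop
  have ht' : hdist E x v = (t : ℕ∞) := ht.symm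
  obtain ⟨htpos, P, hP, hx0, hvlast⟩ := exists_path_of_hdist E hxv ht'
  classical
  set S : Finset (Fin t) := Finset.univ.filter (fun i => (P i ∩ e).Nonempty) with hSdef
  have hlastS : (⟨t - 1, Nat.sub_lt htpos Nat.one_pos⟩ : Fin t) ∈ S := by
    rw [hSdef, Finset.mem_filter]
    exact ⟨Finset.mem_univ _, ⟨v, Finset.mem_inter.mpr ⟨hvlast, hv⟩⟩⟩
  have hS : S.Nonempty := ⟨_, hlastS⟩
  set i0 : Fin t := S.min' hS with hi0def
  have hi0S : (P i0 ∩ e).Nonempty := by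
    have h := S.min'_mem hS
    exact (Finset.mem_filter.mp h).2
  have hmin : ∀ j : Fin t, j < i0 → P j ∩ e = ∅ := by
    intro j hj
    by_contra hne
    have hjS : j ∈ S := by
      rw [hSdef, Finset.mem_filter]
      exact ⟨Finset.mem_univ _, Finset.nonempty_iff_ne_empty.mpr hne⟩
    exact absurd (S.min'_le j hjS) (not_le.mpr hj)
  rw [ht']
  by_cases heq : e = P i0
  · -- truncate the path at i0
    have htr := trunc_path hP i0.2
    have hle : hdist E x u ≤ (((i0 : ℕ) + 1 : ℕ) : ℕ∞) := by
      refine hdist_le_of_path E x u (Nat.succ_pos _) _ htr ?_ ?_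
      · exact hx0
      · show u ∈ P ⟨(i0 : ℕ) + 1 - 1, _⟩
        have h5 : u ∈ P i0 := heq ▸ hu
        convert h5 using 2
        exact Fin.ext (by simp)
    refine le_trans hle ?_
    have h2 : ((i0 : ℕ) + 1 : ℕ) ≤ t + 1 := by have := i0.2; omega
    have h3 : (((i0 : ℕ) + 1 : ℕ) : ℕ∞) ≤ ((t + 1 : ℕ) : ℕ∞) := Nat.cast_le.mpr h2
    refine le_trans h3 ?_
    push_cast
    exact le_refl _
  · -- append e to the truncated path
    have hcard1 : (P i0 ∩ e).card = 1 :=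
      le_antisymm (hlin (P i0) (hP.1 i0) e he (fun h => heq h.symm)) (Finset.card_pos.mpr hi0S)
    have happ := append_path hlin hP i0.2 he hcard1
      (fun j hj => hmin ⟨j, by omega⟩ (by simpa [Fin.lt_def] using hj))
    have hle : hdist E x u ≤ (((i0 : ℕ) + 2 : ℕ) : ℕ∞) := by
      refine hdist_le_of_path E x u (by omega) _ happ ?_ ?_
      · show x ∈ (if h : ((⟨0, by omega⟩ : Fin ((i0 : ℕ) + 2)) : ℕ) < (i0 : ℕ) + 1
          then P ⟨(⟨0, by omega⟩ : Fin ((i0 : ℕ) + 2)), by omega⟩ else e)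
        rw [dif_pos (Nat.succ_pos _)]
        exact hx0
      · show u ∈ (if h : ((⟨(i0 : ℕ) + 2 - 1, by omega⟩ : Fin ((i0 : ℕ) + 2)) : ℕ) < (i0 : ℕ) + 1
          then P ⟨(⟨(i0 : ℕ) + 2 - 1, by omega⟩ : Fin ((i0 : ℕ) + 2)), by omega⟩ else e)
        rw [dif_neg]
        · exact hu
        · show ¬((i0 : ℕ) + 2 - 1 < (i0 : ℕ) + 1)
          omega
    refine le_trans hle ?_
    have h2 : ((i0 : ℕ) + 2 : ℕ) ≤ t + 1 := by have := i0.2; omega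
    have h3 : (((i0 : ℕ) + 2 : ℕ) : ℕ∞) ≤ ((t + 1 : ℕ) : ℕ∞) := Nat.cast_le.mpr h2
    refine le_trans h3 ?_
    push_cast
    exact le_refl _

end Stmt11

namespace Stmt11
variable {V : Type*} [Fintype V] [DecidableEq V]

noncomputable def Lv (E : Finset (Finset V)) (x : V) (i : ℕ) : Finset V :=
  Finset.univ.filter (fun v => hdist E x v = (i : ℕ∞))

noncomputable def Elv (E : Finset (Finset V)) (x : V) (i : ℕ) : Finset (Finset V) :=
  E.filter (fun e => e.inf (fun v => hdist E x v) = (i : ℕ∞))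

lemma mem_Lv {E : Finset (Finset V)} {x : V} {i : ℕ} {v : V} :
    v ∈ Lv E x i ↔ hdist E x v = (i : ℕ∞) := by simp [Lv]

lemma mem_Elv {E : Finset (Finset V)} {x : V} {i : ℕ} {e : Finset V} :
    e ∈ Elv E x i ↔ e ∈ E ∧ e.inf (fun v => hdist E x v) = (i : ℕ∞) := by simp [Elv]

lemma Lv_zero (E : Finset (Finset V)) (x : V) : Lv E x 0 = {x} := by
  ext v
  simp only [mem_Lv, Finset.mem_singleton, Nat.cast_zero]
  rw [hdist_eq_zero_iff]
  exact eq_comm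

lemma enat_pred_le {i : ℕ} {a : ℕ∞} (h : ((i + 1 : ℕ) : ℕ∞) ≤ a + 1) : (i : ℕ∞) ≤ a := by
  induction a using ENat.recTopCoe with
  | top => exact le_top
  | coe k =>
    have h2 : ((i + 1 : ℕ) : ℕ∞) ≤ ((k + 1 : ℕ) : ℕ∞) := by push_cast; push_cast at h; exact h
    have h3 := Nat.cast_le.mp h2
    exact Nat.cast_le.mpr (by omega)

lemma enat_between {i : ℕ} {a : ℕ∞} (h1 : (i : ℕ∞) ≤ a) (h2 : a ≤ ((i + 1 : ℕ) : ℕ∞)) :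
    a = (i : ℕ∞) ∨ a = ((i + 1 : ℕ) : ℕ∞) := by
  induction a using ENat.recTopCoe with
  | top => exact absurd (top_le_iff.mp h2) (ENat.coe_ne_top (i + 1))
  | coe k =>
    have g1 := Nat.cast_le.mp h1
    have g2 := Nat.cast_le.mp h2
    rcases (by omega : k = i ∨ k = i + 1) with h | h
    · subst h; exact Or.inl rfl
    · subst h; exact Or.inr rfl

lemma inf_ge {E : Finset (Finset V)} (hlin : HLinear E) {x v : V} {e : Finset V}
    (he : e ∈ E) (hv : v ∈ e) {i : ℕ} (hdv : hdist E x v = ((i + 1 : ℕ) : ℕ∞)) :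
    ((i : ℕ) : ℕ∞) ≤ e.inf (fun u => hdist E x u) := by
  refine Finset.le_inf ?_
  intro u hu
  have h : hdist E x v ≤ hdist E x u + 1 := hdist_le_add_one hlin he hv hu
  rw [hdv] at h
  exact enat_pred_le h

lemma edge_level {E : Finset (Finset V)} (hlin : HLinear E) {x v : V} {e : Finset V} {i : ℕ}
    (he : e ∈ E) (hv : v ∈ e) (hdv : hdist E x v = ((i + 1 : ℕ) : ℕ∞)) :
    e ∈ Elv E x i ∨ e ∈ Elv E x (i + 1) := by
  have hge := inf_ge hlin he hv hdv
  have hle : e.inf (fun u => hdist E x u) ≤ ((i + 1 : ℕ) : ℕ∞) := by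
    refine le_trans (Finset.inf_le hv) ?_
    rw [hdv]
  rcases enat_between hge hle with h | h
  · exact Or.inl (mem_Elv.mpr ⟨he, h⟩)
  · exact Or.inr (mem_Elv.mpr ⟨he, h⟩)

lemma last_edge {E : Finset (Finset V)} (hlin : HLinear E) {x v : V} {i : ℕ}
    (hdv : hdist E x v = ((i + 1 : ℕ) : ℕ∞)) : ∃ e ∈ Elv E x i, v ∈ e := by
  have hxv : x ≠ v := by
    intro h
    rw [(hdist_eq_zero_iff E).mpr h] at hdv
    exact absurd hdv.symm (by exact_mod_cast Nat.succ_ne_zero i)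
  obtain ⟨ht, P, hP, hx0, hvl⟩ := exists_path_of_hdist E hxv hdv
  refine ⟨P ⟨i + 1 - 1, Nat.sub_lt ht Nat.one_pos⟩, ?_, hvl⟩
  rw [mem_Elv]
  refine ⟨hP.1 _, ?_⟩
  apply le_antisymm
  · -- inf ≤ i
    cases i with
    | zero =>
      refine le_trans (Finset.inf_le (show x ∈ P ⟨0 + 1 - 1, _⟩ from hx0)) ?_
      rw [(hdist_eq_zero_iff E).mpr rfl]
      exact zero_le
    | succ n =>
      have hconn := hP.2.1 ⟨n, by omega⟩ ⟨n + 1, by omega⟩ (by simp)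
      have hne : (P ⟨n, by omega⟩ ∩ P ⟨n + 1, by omega⟩).Nonempty :=
        Finset.card_pos.mp (by rw [hconn]; exact Nat.one_pos)
      obtain ⟨w, hw⟩ := hne
      have hw1 : w ∈ P ⟨n, by omega⟩ := (Finset.mem_inter.mp hw).1
      have hw2 : w ∈ P ⟨n + 1, by omega⟩ := (Finset.mem_inter.mp hw).2
      have htr := trunc_path hP (show n < n + 1 + 1 by omega)
      have hdw : hdist E x w ≤ ((n + 1 : ℕ) : ℕ∞) :=
        hdist_le_of_path E x w (Nat.succ_pos _) _ htr hx0 hw1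
      exact le_trans (Finset.inf_le hw2) hdw
  · exact inf_ge hlin (hP.1 _) hvl hdv

lemma Elv_dist_ge {E : Finset (Finset V)} {x : V} {m : ℕ} {e : Finset V}
    (he : e ∈ Elv E x m) {u : V} (hu : u ∈ e) : ((m : ℕ) : ℕ∞) ≤ hdist E x u := by
  have h := (mem_Elv.mp he).2
  calc ((m : ℕ) : ℕ∞) = e.inf (fun v => hdist E x v) := h.symm
    _ ≤ hdist E x u := Finset.inf_le hu

lemma Elv_exists_vertex {E : Finset (Finset V)} {x : V} {m : ℕ} {e : Finset V}
    (he : e ∈ Elv E x m) (hne : e.Nonempty) : ∃ v ∈ e, hdist E x v = (m : ℕ∞) := by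
  obtain ⟨w, hw, hinf⟩ := Finset.exists_mem_eq_inf e hne (fun v => hdist E x v)
  refine ⟨w, hw, ?_⟩
  rw [← hinf]
  exact (mem_Elv.mp he).2

lemma Elv_vertex_mem {E : Finset (Finset V)} (hlin : HLinear E) {x : V} {m : ℕ} {e : Finset V}
    (he : e ∈ Elv E x m) (hne : e.Nonempty) {u : V} (hu : u ∈ e) :
    u ∈ Lv E x m ∪ Lv E x (m + 1) := by
  obtain ⟨w, hw, hdw⟩ := Elv_exists_vertex he hne
  have h1 := Elv_dist_ge he hu
  have h2 : hdist E x u ≤ hdist E x w + 1 := hdist_le_add_one hlin ((mem_Elv.mp he).1) hu hw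
  rw [hdw] at h2
  have h2' : hdist E x u ≤ ((m + 1 : ℕ) : ℕ∞) := by
    refine le_trans h2 ?_
    push_cast
    exact le_refl _
  rcases enat_between h1 h2' with h | h
  · exact Finset.mem_union_left _ (mem_Lv.mpr h)
  · exact Finset.mem_union_right _ (mem_Lv.mpr h)

lemma Elv_zero_mem_x {E : Finset (Finset V)} {x : V} {e : Finset V}
    (he : e ∈ Elv E x 0) (hne : e.Nonempty) : x ∈ e := by
  obtain ⟨w, hw, hdw⟩ := Elv_exists_vertex he hne
  have hxw : x = w := (hdist_eq_zero_iff E).mp (by simpa using hdw)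
  rwa [hxw]

lemma two_common {E : Finset (Finset V)} (hlin : HLinear E) {e f : Finset V}
    (he : e ∈ E) (hf : f ∈ E) (hef : e ≠ f) {w z : V} (hwz : w ≠ z)
    (hw : w ∈ e) (hw' : w ∈ f) (hz : z ∈ e) (hz' : z ∈ f) : False := by
  have h1 := hlin e he f hf hef
  have hsub : ({w, z} : Finset V) ⊆ e ∩ f := by
    intro a ha
    rcases Finset.mem_insert.mp ha with h | h
    · subst h; exact Finset.mem_inter.mpr ⟨hw, hw'⟩
    · rw [Finset.mem_singleton.mp h]; exact Finset.mem_inter.mpr ⟨hz, hz'⟩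
  have h2 := Finset.card_le_card hsub
  rw [Finset.card_insert_of_notMem (by simp [hwz]), Finset.card_singleton] at h2
  omega

lemma double_count (s : Finset V) (t : Finset (Finset V)) :
    ∑ v ∈ s, (t.filter (fun e => v ∈ e)).card = ∑ e ∈ t, (s.filter (fun v => v ∈ e)).card := by
  simp only [Finset.card_filter]
  exact Finset.sum_comm

lemma count_bound {r : ℕ} {E : Finset (Finset V)} (hcard : ∀ e ∈ E, e.card = r)
    {t : Finset (Finset V)} (ht : t ⊆ E) (s : Finset V) :
    ∑ v ∈ s, (t.filter (fun e => v ∈ e)).card ≤ r * t.card := by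
  rw [double_count]
  have hb : ∀ e ∈ t, (s.filter (fun v => v ∈ e)).card ≤ r := by
    intro e hee
    have h1 : (s.filter (fun v => v ∈ e)).card ≤ e.card :=
      Finset.card_le_card (fun v hv => (Finset.mem_filter.mp hv).2)
    rw [hcard e (ht hee)] at h1
    exact h1
  calc ∑ e ∈ t, (s.filter (fun v => v ∈ e)).card ≤ ∑ _e ∈ t, r := Finset.sum_le_sum hb
    _ = t.card * r := by rw [Finset.sum_const, smul_eq_mul]
    _ = r * t.card := mul_comm _ _

lemma level_ineq {E : Finset (Finset V)} (hlin : HLinear E) {δ : ℕ} (hδ : ∀ v, δ ≤ hdeg E v)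
    (x : V) (i : ℕ) :
    δ * (Lv E x (i + 1)).card ≤
      ∑ v ∈ Lv E x (i + 1), ((Elv E x i).filter (fun e => v ∈ e)).card +
      ∑ v ∈ Lv E x (i + 1), ((Elv E x (i + 1)).filter (fun e => v ∈ e)).card := by
  have h1 : δ * (Lv E x (i + 1)).card ≤ ∑ v ∈ Lv E x (i + 1), hdeg E v := by
    calc δ * (Lv E x (i + 1)).card = (Lv E x (i + 1)).card * δ := mul_comm _ _
      _ = ∑ _v ∈ Lv E x (i + 1), δ := by rw [Finset.sum_const, smul_eq_mul]
      _ ≤ _ := Finset.sum_le_sum (fun v _ => hδ v)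
  refine le_trans h1 ?_
  rw [← Finset.sum_add_distrib]
  refine Finset.sum_le_sum ?_
  intro v hv
  have hdv := mem_Lv.mp hv
  unfold hdeg
  have hsub : E.filter (fun e => v ∈ e) ⊆
      (Elv E x i).filter (fun e => v ∈ e) ∪ (Elv E x (i + 1)).filter (fun e => v ∈ e) := by
    intro e hee
    obtain ⟨heE, hve⟩ := Finset.mem_filter.mp hee
    rcases edge_level hlin heE hve hdv with h | h
    · exact Finset.mem_union_left _ (Finset.mem_filter.mpr ⟨h, hve⟩)
    · exact Finset.mem_union_right _ (Finset.mem_filter.mpr ⟨h, hve⟩)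
  exact le_trans (Finset.card_le_card hsub) (Finset.card_union_le _ _)

lemma A0_bound {E : Finset (Finset V)} (hlin : HLinear E) {r : ℕ} (hr : 3 ≤ r)
    (hcard : ∀ e ∈ E, e.card = r) (x : V) :
    ∑ v ∈ Lv E x 1, ((Elv E x 0).filter (fun e => v ∈ e)).card ≤ (Lv E x 1).card := by
  have hone : ∀ v ∈ Lv E x 1, ((Elv E x 0).filter (fun e => v ∈ e)).card ≤ 1 := by
    intro v hv
    refine Finset.card_le_one.mpr ?_
    intro e hee f hf
    obtain ⟨he0, hve⟩ := Finset.mem_filter.mp hee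
    obtain ⟨hf0, hvf⟩ := Finset.mem_filter.mp hf
    by_contra hne
    have heE : e ∈ E := Finset.filter_subset _ _ he0
    have hfE : f ∈ E := Finset.filter_subset _ _ hf0
    have hene : e.Nonempty := Finset.card_pos.mp (by rw [hcard e heE]; omega)
    have hfne : f.Nonempty := Finset.card_pos.mp (by rw [hcard f hfE]; omega)
    have hex : x ∈ e := Elv_zero_mem_x he0 hene
    have hfx : x ∈ f := Elv_zero_mem_x hf0 hfne
    have hvx : v ≠ x := by
      intro h
      have h2 := mem_Lv.mp hv
      rw [h, (hdist_eq_zero_iff E).mpr rfl] at h2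
      exact absurd h2.symm (by exact_mod_cast Nat.one_ne_zero)
    exact two_common hlin heE hfE hne hvx hve hvf hex hfx
  calc ∑ v ∈ Lv E x 1, ((Elv E x 0).filter (fun e => v ∈ e)).card
      ≤ ∑ _v ∈ Lv E x 1, 1 := Finset.sum_le_sum hone
    _ = (Lv E x 1).card := by simp

lemma L1_big {E : Finset (Finset V)} (hlin : HLinear E) {r δ : ℕ} (hr : 3 ≤ r)
    (hcard : ∀ e ∈ E, e.card = r) (hδ : ∀ v : V, δ ≤ hdeg E v) (x : V) :
    2 * δ ≤ (Lv E x 1).card := by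
  classical
  have hFδ : δ ≤ (E.filter (fun e => x ∈ e)).card := hδ x
  have hsub : (E.filter (fun e => x ∈ e)).biUnion (fun e => e.erase x) ⊆ Lv E x 1 := by
    intro v hv
    obtain ⟨e, heF, hve⟩ := Finset.mem_biUnion.mp hv
    obtain ⟨heE, hxe⟩ := Finset.mem_filter.mp heF
    have hvx : v ≠ x := Finset.ne_of_mem_erase hve
    have hve' : v ∈ e := Finset.mem_of_mem_erase hve
    rw [mem_Lv]
    apply le_antisymm
    · have hP : IsLinearPath E 1 (fun _ => e) :=
        ⟨fun _ => heE, fun i j hij => by have := j.2; omega, fun i j hij => by have := j.2; omega⟩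
      have h := hdist_le_of_path E x v one_pos (fun _ => e) hP hxe hve'
      exact_mod_cast h
    · have h := one_le_hdist E (Ne.symm hvx)
      exact_mod_cast h
  have hdisj : ∀ e ∈ E.filter (fun e => x ∈ e), ∀ f ∈ E.filter (fun e => x ∈ e), e ≠ f →
      Disjoint (e.erase x) (f.erase x) := by
    intro e he f hf hef
    obtain ⟨heE, hxe⟩ := Finset.mem_filter.mp he
    obtain ⟨hfE, hxf⟩ := Finset.mem_filter.mp hf
    rw [Finset.disjoint_left]
    intro w hw hw'
    exact two_common hlin heE hfE hef (Finset.ne_of_mem_erase hw)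
      (Finset.mem_of_mem_erase hw) (Finset.mem_of_mem_erase hw') hxe hxf
  have hcardB := Finset.card_biUnion hdisj
  have hterm : ∀ e ∈ E.filter (fun e => x ∈ e), (e.erase x).card = r - 1 := by
    intro e he
    obtain ⟨heE, hxe⟩ := Finset.mem_filter.mp he
    rw [Finset.card_erase_of_mem hxe, hcard e heE]
  have hsum : ∑ e ∈ E.filter (fun e => x ∈ e), (e.erase x).card
      = (E.filter (fun e => x ∈ e)).card * (r - 1) := by
    rw [Finset.sum_congr rfl hterm, Finset.sum_const, smul_eq_mul]
  have h2 : 2 * δ ≤ (E.filter (fun e => x ∈ e)).card * (r - 1) := by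
    calc 2 * δ = δ * 2 := mul_comm _ _
      _ ≤ (E.filter (fun e => x ∈ e)).card * (r - 1) := Nat.mul_le_mul hFδ (by omega)
  calc 2 * δ ≤ (E.filter (fun e => x ∈ e)).card * (r - 1) := h2
    _ = ((E.filter (fun e => x ∈ e)).biUnion (fun e => e.erase x)).card := by
        rw [hcardB, hsum]
    _ ≤ (Lv E x 1).card := Finset.card_le_card hsub

end Stmt11

open Stmt11

/-- Lemma 3.2: finding a dense subhypergraph concentrated on a level
of the distance partition from a vertex x. -/
theorem stmt11 {V : Type*} [Fintype V] [DecidableEq V] (r : ℕ) (hr : 3 ≤ r)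
    (E : Finset (Finset V)) (hcard : ∀ e ∈ E, e.card = r) (hlin : HLinear E)
    (δ : ℕ) (hδ : ∀ v : V, δ ≤ hdeg E v)
    (d : ℕ) (hd1 : 1 ≤ d) (hd2 : (d : ℝ) ≤ (δ : ℝ) / 2) (x : V) :
    ∃ m : ℕ, 0 < m ∧
      (m : ℤ) ≤ ⌈Real.logb 2 (Fintype.card V) / Real.logb 2 ((δ : ℝ) / d)⌉ ∧
      ∃ E' : Finset (Finset V), E' ⊆ E ∧ E'.Nonempty ∧
        ((d : ℝ) / 4) * ((E'.biUnion id).card : ℝ) ≤ (r : ℝ) * E'.card ∧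
        (∀ e ∈ E', ∃ v ∈ e, hdist E x v = (m : ℕ∞)) ∧
        (∀ e ∈ E', ∀ v ∈ e, ∀ j : ℕ, j < m → hdist E x v ≠ (j : ℕ∞)) := by
  classical
  have f2 : (Lv E x 0).card = 1 := by rw [Lv_zero]; exact Finset.card_singleton x
  have f3 : 2 * δ ≤ (Lv E x 1).card := L1_big hlin hr hcard hδ x
  have f4 : 2 * d ≤ δ := by
    have h : ((2 * d : ℕ) : ℝ) ≤ ((δ : ℕ) : ℝ) := by push_cast; linarith
    exact_mod_cast h
  have f5 : 2 ≤ δ := by omega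
  have f1 : ∀ i : ℕ, δ * (Lv E x (i + 1)).card ≤
      r * (Elv E x i).card + r * (Elv E x (i + 1)).card := by
    intro i
    have h := level_ineq hlin hδ x i
    have h2 := count_bound hcard (Finset.filter_subset _ E) (Lv E x (i + 1)) (t := Elv E x i)
    have h3 := count_bound hcard (Finset.filter_subset _ E) (Lv E x (i + 1)) (t := Elv E x (i + 1))
    linarith
  have f1' : δ * (Lv E x 1).card ≤ (Lv E x 1).card + r * (Elv E x 1).card := by
    have h := level_ineq hlin hδ x 0
    have h0 := A0_bound hlin hr hcard x
    have h3 := count_bound hcard (Finset.filter_subset _ E) (Lv E x 1) (t := Elv E x 1)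
    linarith
  -- growth under failure
  have grow : ∀ i : ℕ,
      (∀ j, 1 ≤ j → j ≤ i →
        ¬ (d * ((Lv E x j).card + (Lv E x (j + 1)).card) ≤ 4 * (r * (Elv E x j).card))) →
      δ * (Lv E x i).card ≤ d * (Lv E x (i + 1)).card := by
    intro i
    induction i with
    | zero =>
      intro _
      rw [f2, mul_one]
      calc δ ≤ 2 * δ := by omega
        _ ≤ (Lv E x 1).card := f3
        _ ≤ d * (Lv E x 1).card := Nat.le_mul_of_pos_left _ (by omega)
    | succ i ih =>
      intro hfail
      have hgood : 4 * (r * (Elv E x (i + 1)).card) <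
          d * ((Lv E x (i + 1)).card + (Lv E x (i + 1 + 1)).card) :=
        Nat.lt_of_not_le (hfail (i + 1) (by omega) (le_refl _))
      have H3 : 4 * (r * (Elv E x (i + 1)).card) <
          d * (Lv E x (i + 1)).card + d * (Lv E x (i + 1 + 1)).card := by
        rw [← Nat.mul_add]; exact hgood
      rcases Nat.eq_zero_or_pos i with hi0 | hip
      · subst hi0
        have H1 := f1'
        have Hc : 4 * (Lv E x 1).card + d * (Lv E x 1).card ≤ 3 * (δ * (Lv E x 1).card) := by
          have hcoef : 4 + d ≤ 3 * δ := by omega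
          calc 4 * (Lv E x 1).card + d * (Lv E x 1).card
              = (4 + d) * (Lv E x 1).card := by ring
            _ ≤ (3 * δ) * (Lv E x 1).card := Nat.mul_le_mul_right _ hcoef
            _ = 3 * (δ * (Lv E x 1).card) := by ring
        have H3' : 4 * (r * (Elv E x (0 + 1)).card) <
            d * (Lv E x (0 + 1)).card + d * (Lv E x (0 + 1 + 1)).card := H3
        simp only [Nat.zero_add] at H3' ⊢
        nlinarith [Nat.zero_le (δ * (Lv E x 1).card), Nat.zero_le (d * (Lv E x 1).card)]
      · have ih' := ih (fun j hj1 hj2 => hfail j hj1 (by omega))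
        have hgood' : 4 * (r * (Elv E x i).card) <
            d * ((Lv E x i).card + (Lv E x (i + 1)).card) :=
          Nat.lt_of_not_le (hfail i (by omega) (by omega))
        have H2 : 4 * (r * (Elv E x i).card) <
            d * (Lv E x i).card + d * (Lv E x (i + 1)).card := by
          rw [← Nat.mul_add]; exact hgood'
        have H1 := f1 i
        have H5 : 2 * (d * (Lv E x i).card) ≤ d * (Lv E x (i + 1)).card := by
          calc 2 * (d * (Lv E x i).card) = (2 * d) * (Lv E x i).card := by ring
            _ ≤ δ * (Lv E x i).card := Nat.mul_le_mul_right _ f4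
            _ ≤ d * (Lv E x (i + 1)).card := ih'
        have H6 : d * (Lv E x (i + 1)).card ≤ δ * (Lv E x (i + 1)).card :=
          Nat.mul_le_mul_right _ (by omega)
        nlinarith [Nat.zero_le (δ * (Lv E x (i + 1)).card), Nat.zero_le (d * (Lv E x (i + 1)).card)]
  -- iterated growth
  have pow_growth : ∀ K : ℕ,
      (∀ j, 1 ≤ j → j ≤ K →
        ¬ (d * ((Lv E x j).card + (Lv E x (j + 1)).card) ≤ 4 * (r * (Elv E x j).card))) →
      ∀ i, i ≤ K + 1 → δ ^ i ≤ d ^ i * (Lv E x i).card := by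
    intro K hfail i
    induction i with
    | zero => intro _; simp [f2]
    | succ i ih =>
      intro hiK
      have h1 := ih (by omega)
      have h2 := grow i (fun j hj1 hj2 => hfail j hj1 (by omega))
      calc δ ^ (i + 1) = δ * δ ^ i := by ring
        _ ≤ δ * (d ^ i * (Lv E x i).card) := Nat.mul_le_mul_left _ h1
        _ = d ^ i * (δ * (Lv E x i).card) := by ring
        _ ≤ d ^ i * (d * (Lv E x (i + 1)).card) := Nat.mul_le_mul_left _ h2
        _ = d ^ (i + 1) * (Lv E x (i + 1)).card := by ring
  -- real/log setup
  set n := Fintype.card V with hn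
  have hL1n : (Lv E x 1).card ≤ n := by rw [hn]; exact Finset.card_le_univ _
  have hn4 : 4 ≤ n := le_trans (by omega) (le_trans f3 hL1n)
  have hd0 : (0 : ℝ) < d := by exact_mod_cast hd1
  have hδ0 : (0 : ℝ) < δ := by exact_mod_cast f5.trans_lt' (by norm_num)
  have hδd : (2 : ℝ) ≤ (δ : ℝ) / d := by
    rw [le_div_iff₀ hd0]
    exact_mod_cast (by exact_mod_cast f4 : ((2 * d : ℕ) : ℝ) ≤ (δ : ℝ))
  set ρ := Real.logb 2 (n : ℝ) / Real.logb 2 ((δ : ℝ) / d) with hρ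
  have hlogd : (1 : ℝ) ≤ Real.logb 2 ((δ : ℝ) / d) := by
    have h := Real.logb_le_logb_of_le (by norm_num : (1 : ℝ) < 2) (by norm_num) hδd
    rwa [Real.logb_self_eq_one (by norm_num)] at h
  have hlogn : (0 : ℝ) < Real.logb 2 (n : ℝ) :=
    Real.logb_pos (by norm_num) (by exact_mod_cast (by omega : 1 < n))
  have hρpos : (0 : ℝ) < ρ := div_pos hlogn (by linarith)
  set M : ℕ := (⌈ρ⌉).toNat with hM
  have hMc : (M : ℤ) = ⌈ρ⌉ := Int.toNat_of_nonneg (Int.ceil_nonneg hρpos.le)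
  have hMρ : ρ ≤ (M : ℝ) := by
    have h := Int.le_ceil ρ
    rw [← hMc] at h
    exact_mod_cast h
  -- a good level exists below M
  have key : ∃ m, 1 ≤ m ∧ m ≤ M ∧
      d * ((Lv E x m).card + (Lv E x (m + 1)).card) ≤ 4 * (r * (Elv E x m).card) := by
    by_contra hno
    push_neg at hno
    have hpow := pow_growth M (fun j a b => not_le.mpr (hno j a b)) (M + 1) (le_refl _)
    have hLn : (Lv E x (M + 1)).card ≤ n := by rw [hn]; exact Finset.card_le_univ _
    have hN : δ ^ (M + 1) ≤ d ^ (M + 1) * n :=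
      le_trans hpow (Nat.mul_le_mul_left _ hLn)
    have hR : ((δ : ℝ) / d) ^ (M + 1) ≤ (n : ℝ) := by
      rw [div_pow, div_le_iff₀ (by positivity)]
      have hN' : δ ^ (M + 1) ≤ n * d ^ (M + 1) := by rw [Nat.mul_comm]; exact hN
      exact_mod_cast hN'
    have hlog := Real.logb_le_logb_of_le (by norm_num : (1 : ℝ) < 2)
      (by positivity) hR
    rw [Real.logb_pow] at hlog
    have hfin : ((M : ℝ) + 1) ≤ ρ := by
      rw [hρ, le_div_iff₀ (by linarith)]
      calc ((M : ℝ) + 1) * Real.logb 2 ((δ : ℝ) / d)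
          = ((M + 1 : ℕ) : ℝ) * Real.logb 2 ((δ : ℝ) / d) := by push_cast; ring
        _ ≤ Real.logb 2 (n : ℝ) := hlog
    linarith
  obtain ⟨m0, hm01, hm0M, hm0good⟩ := key
  -- the minimal good level
  set S : Finset ℕ := (Finset.Icc 1 M).filter (fun j =>
    d * ((Lv E x j).card + (Lv E x (j + 1)).card) ≤ 4 * (r * (Elv E x j).card)) with hS
  have hSne : S.Nonempty :=
    ⟨m0, Finset.mem_filter.mpr ⟨Finset.mem_Icc.mpr ⟨hm01, hm0M⟩, hm0good⟩⟩
  set m := S.min' hSne with hm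
  have hmS := S.min'_mem hSne
  have hmgood : d * ((Lv E x m).card + (Lv E x (m + 1)).card) ≤ 4 * (r * (Elv E x m).card) :=
    (Finset.mem_filter.mp hmS).2
  have hmIcc := Finset.mem_Icc.mp (Finset.mem_filter.mp hmS).1
  have hmin : ∀ j, 1 ≤ j → j < m →
      ¬ (d * ((Lv E x j).card + (Lv E x (j + 1)).card) ≤ 4 * (r * (Elv E x j).card)) := by
    intro j h1 h2 hg
    have hjS : j ∈ S := Finset.mem_filter.mpr ⟨Finset.mem_Icc.mpr ⟨h1, by omega⟩, hg⟩
    exact absurd (S.min'_le j hjS) (by omega)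
  have hpos : ∀ i, i ≤ m → 1 ≤ (Lv E x i).card := by
    intro i
    induction i with
    | zero => intro _; omega
    | succ i ih =>
      intro hi
      have h1 := ih (by omega)
      have h2 := grow i (fun j hj1 hj2 => hmin j hj1 (by omega))
      by_contra h0
      have hz : (Lv E x (i + 1)).card = 0 := by omega
      rw [hz, Nat.mul_zero] at h2
      have h3 : 1 * 1 ≤ δ * (Lv E x i).card := Nat.mul_le_mul (by omega) h1
      omega
  have ham : 1 ≤ (Lv E x m).card := hpos m (le_refl _)
  have hbm : 0 < (Elv E x m).card := by
    by_contra h0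
    have hb0 : (Elv E x m).card = 0 := by omega
    rw [hb0, Nat.mul_zero, Nat.mul_zero] at hmgood
    have h4 : d * 1 ≤ d * ((Lv E x m).card + (Lv E x (m + 1)).card) :=
      Nat.mul_le_mul_left d (by omega)
    omega
  have hEne : ∀ e ∈ Elv E x m, e.Nonempty := by
    intro e he
    have heE : e ∈ E := Finset.filter_subset _ E he
    exact Finset.card_pos.mp (by rw [hcard e heE]; omega)
  refine ⟨m, by omega, ?_, Elv E x m, Finset.filter_subset _ E, Finset.card_pos.mp hbm,
    ?_, ?_, ?_⟩
  · rw [← hMc]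
    exact_mod_cast (by exact_mod_cast hmIcc.2 : (m : ℤ) ≤ (M : ℤ))
  · -- density
    have hsub : (Elv E x m).biUnion id ⊆ Lv E x m ∪ Lv E x (m + 1) := by
      intro u hu
      obtain ⟨e, hee, hue⟩ := Finset.mem_biUnion.mp hu
      exact Elv_vertex_mem hlin hee (hEne e hee) hue
    have h1 : ((Elv E x m).biUnion id).card ≤ (Lv E x m).card + (Lv E x (m + 1)).card :=
      le_trans (Finset.card_le_card hsub) (Finset.card_union_le _ _)
    have h2 : d * ((Elv E x m).biUnion id).card ≤ 4 * (r * (Elv E x m).card) :=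
      le_trans (Nat.mul_le_mul_left d h1) hmgood
    have h3 : (d : ℝ) * (((Elv E x m).biUnion id).card : ℝ) ≤
        4 * ((r : ℝ) * ((Elv E x m).card : ℝ)) := by exact_mod_cast h2
    linarith
  · intro e he
    exact Elv_exists_vertex he (hEne e he)
  · intro e he v hv j hj heq
    have h1 := Elv_dist_ge he hv
    rw [heq] at h1
    have h2 : m ≤ j := by exact_mod_cast h1
    omega
end
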